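/- Let X, Y be independent nonnegative random variables with distributions F, G ∈ 𝒯 = ℒ ∩ 𝒫𝒟 such that the convolution satisfies (F*G)‾(x) ~ F̄(x) + Ḡ(x) as x→∞. Then F*G ∈ 𝒫𝒟, and moreover the maximum satisfies P[max(X,Y) > x] = F̄(x) + Ḡ(x) − F̄(x)Ḡ(x) ~ F̄(x) + Ḡ(x), so the distribution of max(X,Y) is also in 𝒫𝒟. -/

import Mathlib

open Filter MeasureTheory

/-- Tail of (the distribution of) a random variable `X`. -/
noncomputable def rtail {Ω : Type*} [MeasurableSpace Ω] (μ : Measure Ω) (X : Ω → ℝ) (x : ℝ) : ℝ :=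
  (μ {ω | x < X ω}).toReal

/-- The positively decreasing class `𝒫𝒟`. -/
def PosDec (T : ℝ → ℝ) : Prop :=
  ∀ v : ℝ, 1 < v → limsup (fun x => T (v * x) / T x) atTop < 1

/-- The generalized long-tailed class `𝒪ℒ`. -/
def GenLong (T : ℝ → ℝ) : Prop :=
  ∀ t : ℝ, t ≠ 0 → IsBoundedUnder (· ≤ ·) atTop (fun x => T (x - t) / T x)

/-- The long-tailed class `ℒ`. -/
def LongTailed (T : ℝ → ℝ) : Prop :=
  ∀ t : ℝ, Tendsto (fun x => T (x - t) / T x) atTop (nhds 1)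

/-- The dominatedly varying class `𝒟`. -/
def DomVar (T : ℝ → ℝ) : Prop :=
  ∀ b : ℝ, 0 < b → b < 1 → IsBoundedUnder (· ≤ ·) atTop (fun x => T (b * x) / T x)

/-- Strong asymptotic independence with constant `C`:
`P[X > x, Y > y] ~ C ⋅ F̄(x) ⋅ Ḡ(y)` as `(x, y) → (∞, ∞)`. -/
def SAI {Ω : Type*} [MeasurableSpace Ω] (μ : Measure Ω) (X Y : Ω → ℝ) (C : ℝ) : Prop :=
  Tendsto
    (fun p : ℝ × ℝ =>
      (μ {ω | p.1 < X ω ∧ p.2 < Y ω}).toReal / (rtail μ X p.1 * rtail μ Y p.2))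
    (atTop ×ˢ atTop) (nhds C)


lemma rtail_nonneg {Ω : Type*} [MeasurableSpace Ω] (μ : Measure Ω) (X : Ω → ℝ) (x : ℝ) :
    0 ≤ rtail μ X x := ENNReal.toReal_nonneg

lemma rtail_anti {Ω : Type*} [MeasurableSpace Ω] (μ : Measure Ω) [IsFiniteMeasure μ]
    (X : Ω → ℝ) : Antitone (rtail μ X) := fun a b hab =>
  ENNReal.toReal_mono (measure_ne_top μ _)
    (measure_mono fun ω hω => lt_of_le_of_lt hab hω)

lemma rtail_tendsto_zero {Ω : Type*} [MeasurableSpace Ω] (μ : Measure Ω) [IsFiniteMeasure μ]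
    (X : Ω → ℝ) (hmX : Measurable X) : Tendsto (rtail μ X) atTop (nhds 0) := by
  have hmeas : ∀ n : ℕ, NullMeasurableSet {ω | (n : ℝ) < X ω} μ := fun n =>
    (hmX measurableSet_Ioi).nullMeasurableSet
  have hanti : Antitone fun n : ℕ => {ω | (n : ℝ) < X ω} := fun a b hab ω hω => by
    simp only [Set.mem_setOf_eq] at *
    exact lt_of_le_of_lt (Nat.cast_le.mpr hab) hω
  have h0 := tendsto_measure_iInter_atTop hmeas hanti ⟨0, measure_ne_top μ _⟩
  have hempty : ⋂ n : ℕ, {ω | (n : ℝ) < X ω} = ∅ := by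
    ext ω
    simp only [Set.mem_iInter, Set.mem_setOf_eq, Set.mem_empty_iff_false, iff_false, not_forall,
      not_lt]
    obtain ⟨n, hn⟩ := exists_nat_gt (X ω)
    exact ⟨n, hn.le⟩
  rw [hempty, measure_empty] at h0
  have h1 : Tendsto (fun n : ℕ => rtail μ X n) atTop (nhds 0) := by
    have := (ENNReal.tendsto_toReal (by simp)).comp h0
    exact this
  apply tendsto_of_tendsto_of_tendsto_of_le_of_le' tendsto_const_nhds
    (h1.comp tendsto_nat_floor_atTop)
  · exact Eventually.of_forall fun x => rtail_nonneg μ X x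
  · filter_upwards [eventually_ge_atTop (0 : ℝ)] with x hx
    exact rtail_anti μ X (Nat.floor_le hx)

lemma posdec_aux {F G T : ℝ → ℝ} (hF0 : ∀ x, 0 ≤ F x) (hG0 : ∀ x, 0 ≤ G x)
    (hT0 : ∀ x, 0 ≤ T x) (hFa : Antitone F) (hGa : Antitone G)
    (hFPD : PosDec F) (hGPD : PosDec G)
    (h : Tendsto (fun x => T x / (F x + G x)) atTop (nhds 1)) : PosDec T := by
  intro v hv
  have hLF := hFPD v hv
  have hLG := hGPD v hv
  set m : ℝ := max (limsup (fun x => F (v * x) / F x) atTop)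
      (max (limsup (fun x => G (v * x) / G x) atTop) 0) with hm
  have hm1 : m < 1 := max_lt hLF (max_lt hLG one_pos)
  have hm0 : 0 ≤ m := le_max_of_le_right (le_max_right _ _)
  set c : ℝ := (m + 1) / 2 with hc
  have hc0 : 0 < c := by rw [hc]; linarith
  have hc1 : c < 1 := by rw [hc]; linarith
  have hmc : m < c := by rw [hc]; linarith
  have hratio : ∀ (H : ℝ → ℝ), (∀ x, 0 ≤ H x) → Antitone H →
      limsup (fun x => H (v * x) / H x) atTop < c →
      ∀ᶠ x in atTop, H (v * x) ≤ c * H x := by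
    intro H h0 ha hl
    have hb : ∀ᶠ x in atTop, H (v * x) / H x ≤ 1 := by
      filter_upwards [eventually_ge_atTop (0 : ℝ)] with x hx
      have hxv : x ≤ v * x := le_mul_of_one_le_left hx hv.le
      rcases (h0 x).eq_or_lt with h1 | h1
      · have h2 : H (v * x) = 0 := le_antisymm (h1 ▸ ha hxv) (h0 _)
        simp [h2]
      · exact div_le_one_of_le₀ (ha hxv) h1.le
    have hbdd : IsBoundedUnder (· ≤ ·) atTop (fun x => H (v * x) / H x) :=
      ⟨1, by simpa [eventually_map] using hb⟩
    have hev := eventually_lt_of_limsup_lt hl hbdd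
    filter_upwards [hev, eventually_ge_atTop (0 : ℝ)] with x h1 hx
    have hxv : x ≤ v * x := le_mul_of_one_le_left hx hv.le
    rcases (h0 x).eq_or_lt with h2 | h2
    · have h3 : H (v * x) = 0 := le_antisymm (h2 ▸ ha hxv) (h0 _)
      rw [h3, ← h2, mul_zero]
    · exact le_of_lt ((div_lt_iff₀ h2).mp h1)
  have hFe := hratio F hF0 hFa (lt_of_le_of_lt (le_max_left _ _) hmc)
  have hGe := hratio G hG0 hGa
    (lt_of_le_of_lt (le_max_of_le_right (le_max_left _ _)) hmc)
  set ε : ℝ := (1 - c) / (2 * (1 + c)) with hε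
  have hε0 : 0 < ε := div_pos (by linarith) (by linarith)
  have hεc : ε * (1 + c) = (1 - c) / 2 := by
    rw [hε]; field_simp
  have hεlt : ε < 1 / 2 := by nlinarith
  have hkey : c * (1 + ε) < 1 - ε := by nlinarith
  have h1ε : (0:ℝ) < 1 - ε := by linarith
  have hTev : ∀ᶠ x in atTop, 0 < F x + G x ∧ (1 - ε) * (F x + G x) ≤ T x ∧
      T x ≤ (1 + ε) * (F x + G x) := by
    have hball := h.eventually (Metric.ball_mem_nhds (1 : ℝ) hε0)
    filter_upwards [hball] with x hx
    rw [Real.dist_eq] at hx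
    obtain ⟨ha, hb⟩ := abs_lt.mp hx
    have hH : 0 < F x + G x := by
      rcases (add_nonneg (hF0 x) (hG0 x)).eq_or_lt with h2 | h2
      · rw [← h2, div_zero] at ha; linarith
      · exact h2
    refine ⟨hH, ?_, ?_⟩
    · have := (lt_div_iff₀ hH).mp (by linarith : (1:ℝ) - ε < T x / (F x + G x))
      linarith
    · have := (div_lt_iff₀ hH).mp (by linarith : T x / (F x + G x) < 1 + ε)
      linarith
  have hvt : Tendsto (fun x : ℝ => v * x) atTop atTop :=
    Tendsto.const_mul_atTop (by linarith) tendsto_id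
  have hfinal : ∀ᶠ x in atTop, T (v * x) / T x ≤ c * (1 + ε) / (1 - ε) := by
    filter_upwards [hFe, hGe, hTev, hvt.eventually hTev] with x hFx hGx hT hT'
    obtain ⟨hH, hTlo, hThi⟩ := hT
    obtain ⟨hH', hTlo', hThi'⟩ := hT'
    have hTpos : 0 < T x := lt_of_lt_of_le (by nlinarith) hTlo
    rw [div_le_iff₀ hTpos]
    have hd : c * (1 + ε) / (1 - ε) * (1 - ε) = c * (1 + ε) := by field_simp
    have hd0 : 0 ≤ c * (1 + ε) / (1 - ε) := by
      apply div_nonneg <;> nlinarith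
    have h1 : T (v * x) ≤ (1 + ε) * (c * F x + c * G x) :=
      le_trans hThi' (mul_le_mul_of_nonneg_left (by linarith) (by linarith))
    have h2 := mul_le_mul_of_nonneg_left hTlo hd0
    have h3 : c * (1 + ε) / (1 - ε) * ((1 - ε) * (F x + G x)) =
        (1 + ε) * (c * F x + c * G x) := by field_simp
    linarith
  have hcob : IsCoboundedUnder (· ≤ ·) atTop (fun x => T (v * x) / T x) :=
    isCoboundedUnder_le_of_le atTop fun x => div_nonneg (hT0 _) (hT0 _)
  refine lt_of_le_of_lt (limsup_le_of_le hcob hfinal) ?_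
  rw [div_lt_one h1ε]; linarith

theorem stmt18 {Ω : Type*} [MeasurableSpace Ω] (μ : Measure Ω) [IsProbabilityMeasure μ]
    (X Y : Ω → ℝ) (hX : ∀ ω, 0 ≤ X ω) (hY : ∀ ω, 0 ≤ Y ω)
    (hmX : Measurable X) (hmY : Measurable Y)
    (hindep : ProbabilityTheory.IndepFun X Y μ)
    (hFL : LongTailed (rtail μ X)) (hFPD : PosDec (rtail μ X))
    (hGL : LongTailed (rtail μ Y)) (hGPD : PosDec (rtail μ Y))
    (hconv : Tendsto
      (fun x => rtail μ (fun ω => X ω + Y ω) x / (rtail μ X x + rtail μ Y x))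
      atTop (nhds 1)) :
    PosDec (rtail μ (fun ω => X ω + Y ω)) ∧
    (∀ x : ℝ, rtail μ (fun ω => max (X ω) (Y ω)) x =
      rtail μ X x + rtail μ Y x - rtail μ X x * rtail μ Y x) ∧
    Tendsto
      (fun x => rtail μ (fun ω => max (X ω) (Y ω)) x / (rtail μ X x + rtail μ Y x))
      atTop (nhds 1) ∧
    PosDec (rtail μ (fun ω => max (X ω) (Y ω))) := by
  have hF0 : ∀ x, 0 ≤ rtail μ X x := rtail_nonneg μ X
  have hG0 : ∀ x, 0 ≤ rtail μ Y x := rtail_nonneg μ Y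
  have hFa : Antitone (rtail μ X) := rtail_anti μ X
  have hGa : Antitone (rtail μ Y) := rtail_anti μ Y
  have hid : ∀ x : ℝ, rtail μ (fun ω => max (X ω) (Y ω)) x =
      rtail μ X x + rtail μ Y x - rtail μ X x * rtail μ Y x := by
    intro x
    have hset : {ω | x < max (X ω) (Y ω)} = {ω | x < X ω} ∪ {ω | x < Y ω} := by
      ext ω; simp [lt_max_iff]
    have hBmeas : MeasurableSet {ω | x < Y ω} := hmY measurableSet_Ioi
    have hunion := measure_union_add_inter (μ := μ) {ω | x < X ω} hBmeas
    have hint : μ ({ω | x < X ω} ∩ {ω | x < Y ω}) = μ {ω | x < X ω} * μ {ω | x < Y ω} :=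
      hindep.measure_inter_preimage_eq_mul _ _ measurableSet_Ioi measurableSet_Ioi
    rw [hint] at hunion
    have h1 := congrArg ENNReal.toReal hunion
    rw [ENNReal.toReal_add (measure_ne_top μ _)
        (ENNReal.mul_ne_top (measure_ne_top μ _) (measure_ne_top μ _)),
      ENNReal.toReal_add (measure_ne_top μ _) (measure_ne_top μ _), ENNReal.toReal_mul] at h1
    unfold rtail
    rw [hset]
    linarith
  have hHpos : ∀ᶠ x in atTop, 0 < rtail μ X x + rtail μ Y x := by
    filter_upwards [hconv.eventually (Metric.ball_mem_nhds (1 : ℝ) one_half_pos)] with x hx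
    rw [Real.dist_eq] at hx
    obtain ⟨ha, hb⟩ := abs_lt.mp hx
    rcases (add_nonneg (hF0 x) (hG0 x)).eq_or_lt with h2 | h2
    · rw [← h2, div_zero] at ha; linarith
    · exact h2
  have hFz := rtail_tendsto_zero μ X hmX
  have hq : Tendsto (fun x => rtail μ X x * rtail μ Y x / (rtail μ X x + rtail μ Y x))
      atTop (nhds 0) := by
    apply tendsto_of_tendsto_of_tendsto_of_le_of_le' tendsto_const_nhds hFz
    · exact Eventually.of_forall fun x =>
        div_nonneg (mul_nonneg (hF0 x) (hG0 x)) (add_nonneg (hF0 x) (hG0 x))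
    · filter_upwards [hHpos] with x hx
      rw [div_le_iff₀ hx]
      nlinarith [hF0 x, hG0 x, mul_self_nonneg (rtail μ X x)]
  have h3 : Tendsto
      (fun x => rtail μ (fun ω => max (X ω) (Y ω)) x / (rtail μ X x + rtail μ Y x))
      atTop (nhds 1) := by
    have heq : ∀ᶠ x in atTop,
        1 - rtail μ X x * rtail μ Y x / (rtail μ X x + rtail μ Y x) =
          rtail μ (fun ω => max (X ω) (Y ω)) x / (rtail μ X x + rtail μ Y x) := by
      filter_upwards [hHpos] with x hx
      rw [hid x]
      field_simp
    have h' : Tendsto (fun x =>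
        1 - rtail μ X x * rtail μ Y x / (rtail μ X x + rtail μ Y x)) atTop (nhds (1 - 0)) :=
      tendsto_const_nhds.sub hq
    rw [sub_zero] at h'
    exact h'.congr' heq
  exact ⟨posdec_aux hF0 hG0 (fun _ => rtail_nonneg μ _ _) hFa hGa hFPD hGPD hconv,
    hid, h3,
    posdec_aux hF0 hG0 (fun _ => rtail_nonneg μ _ _) hFa hGa hFPD hGPD h3⟩
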